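/- Let E be a finite-dimensional real inner product space, let (h₁, …, h_p) be a basis of E with ⟨h_i, h_j⟩ ≤ 0 for all i ≠ j, and let (e₁, …, e_p) be the dual basis, characterized by ⟨h_i, e_j⟩ = 1 if i = j and 0 otherwise. Then ⟨e_i, e_j⟩ ≥ 0 for all i, j. -/

import Mathlib

open scoped RealInnerProductSpace

/-- The dual basis of a basis whose vectors have pairwise nonpositive inner
products has pairwise nonnegative inner products. -/
theorem dual_basis_inner_nonneg
    {E : Type*} [NormedAddCommGroup E] [InnerProductSpace ℝ E]
    (p : ℕ) (b : Module.Basis (Fin p) ℝ E)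
    (hobtuse : ∀ i j : Fin p, i ≠ j → ⟪b i, b j⟫ ≤ 0)
    (e : Fin p → E) (hdual : ∀ i j : Fin p, ⟪b i, e j⟫ = if i = j then 1 else 0) :
    ∀ i j : Fin p, 0 ≤ ⟪e i, e j⟫ := by
  have key : ∀ j k : Fin p, 0 ≤ b.repr (e j) k := by
    intro j k
    set c : Fin p → ℝ := fun k => b.repr (e j) k with hc
    set n : Fin p → ℝ := fun k => max (-(c k)) 0 with hn
    set q : Fin p → ℝ := fun k => max (c k) 0 with hq
    have hn0 : ∀ k, 0 ≤ n k := fun k => le_max_right _ _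
    have hq0 : ∀ k, 0 ≤ q k := fun k => le_max_right _ _
    have hqn : ∀ k, q k - n k = c k := fun k => max_zero_sub_eq_self (c k)
    set y : E := ∑ k, n k • b k with hy
    set x : E := ∑ k, q k • b k with hx
    have hej : x - y = e j := by
      rw [hx, hy, ← Finset.sum_sub_distrib]
      have : ∀ k ∈ Finset.univ, q k • b k - n k • b k = c k • b k := by
        intro k _; rw [← sub_smul, hqn]
      rw [Finset.sum_congr rfl this]
      exact b.sum_repr (e j)
    have hyx : ⟪y, x⟫ ≤ 0 := by
      rw [hy, hx, sum_inner]
      apply Finset.sum_nonpos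
      intro k _
      rw [real_inner_smul_left, inner_sum]
      rcases le_or_gt (c k) 0 with h | h
      · have hqk : q k = 0 := max_eq_right h
        apply mul_nonpos_of_nonneg_of_nonpos (hn0 k)
        apply Finset.sum_nonpos
        intro l _
        rw [real_inner_smul_right]
        rcases eq_or_ne k l with rfl | hkl
        · rw [hqk, zero_mul]
        · exact mul_nonpos_of_nonneg_of_nonpos (hq0 l) (hobtuse k l hkl)
      · have hnk : n k = 0 := max_eq_right (by linarith)
        rw [hnk, zero_mul]
    have hyej : ⟪y, e j⟫ = n j := by
      rw [hy, sum_inner]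
      rw [Finset.sum_eq_single j]
      · rw [real_inner_smul_left, hdual, if_pos rfl, mul_one]
      · intro l _ hl
        rw [real_inner_smul_left, hdual, if_neg hl, mul_zero]
      · intro h; exact absurd (Finset.mem_univ j) h
    have hy2 : ⟪y, y⟫ ≤ 0 := by
      have : y = x - e j := by rw [← hej]; abel
      calc ⟪y, y⟫ = ⟪y, x⟫ - ⟪y, e j⟫ := by rw [this, inner_sub_right]
        _ ≤ 0 - n j := by exact sub_le_sub hyx (le_of_eq hyej.symm)
        _ ≤ 0 := by linarith [hn0 j]
    have hy0 : y = 0 := by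
      have := real_inner_self_nonpos.mp hy2
      exact this
    have hnz : n k = 0 := by
      have hli := Fintype.linearIndependent_iff.mp b.linearIndependent n (by rw [← hy, hy0]) k
      exact hli
    have : -(c k) ≤ 0 := by
      by_contra h
      push_neg at h
      have : n k = -(c k) := max_eq_left h.le
      rw [hnz] at this; linarith
    linarith
  intro i j
  have : ⟪e i, e j⟫ = b.repr (e j) i := by
    conv_lhs => rw [← b.sum_repr (e j)]
    rw [inner_sum]
    rw [Finset.sum_eq_single i]
    · rw [real_inner_smul_right, show ⟪e i, b i⟫ = ⟪b i, e i⟫ from real_inner_comm _ _,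
        hdual, if_pos rfl, mul_one]
    · intro l _ hl
      rw [real_inner_smul_right, show ⟪e i, b l⟫ = ⟪b l, e i⟫ from real_inner_comm _ _,
        hdual, if_neg hl, mul_zero]
    · intro h; exact absurd (Finset.mem_univ i) h
  rw [this]
  exact key j i
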